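/- Let n be a positive integer and let d be an integer with 0 ≤ d ≤ n − 1. Then u_d(d) = 1/(1 + d), and u_d(d) ≥ u_i(d) for every integer i with 0 ≤ i ≤ n − 1; in particular, max_{0 ≤ i ≤ n−1} u_i(d) = 1/(1 + d). Consequently, the minimum of the set {f ∈ ℝ : f ≥ u_i(d) for all integers 0 ≤ i ≤ n − 1} equals 1/(1 + d). -/

import Mathlib

lemma key_prod (i d : ℕ) : ((i:ℝ) - d) * ((i:ℝ) - d + 1) ≥ 0 := by
  rcases lt_or_ge i d with h | h
  · have h' : (i:ℝ) + 1 ≤ d := by exact_mod_cast h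
    nlinarith
  · have h' : (d:ℝ) ≤ i := by exact_mod_cast h
    nlinarith

/-- For `0 ≤ d ≤ n - 1`, one has `u_d(d) = 1/(1+d)` and `u_d(d) ≥ u_i(d)` for all
`0 ≤ i ≤ n - 1`; in particular `max_{0 ≤ i ≤ n-1} u_i(d) = 1/(1+d)`, and the minimum of
`{f : ℝ | f ≥ u_i(d) for all 0 ≤ i ≤ n - 1}` equals `1/(1+d)`. -/
theorem max_secant_eq_inv_one_add
    (u : ℕ → ℝ → ℝ)
    (hu : ∀ (i : ℕ) (d : ℝ),
      u i d = -(d - (i : ℝ)) / (((i : ℝ) + 1) * ((i : ℝ) + 2)) + 1 / ((i : ℝ) + 1))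
    (n : ℕ) (hn : 0 < n) (d : ℕ) (hd : d ≤ n - 1) :
    u d (d : ℝ) = 1 / (1 + (d : ℝ)) ∧
    (∀ i : ℕ, i ≤ n - 1 → u d (d : ℝ) ≥ u i (d : ℝ)) ∧
    IsGreatest {r : ℝ | ∃ i : ℕ, i ≤ n - 1 ∧ r = u i (d : ℝ)} (1 / (1 + (d : ℝ))) ∧
    IsLeast {f : ℝ | ∀ i : ℕ, i ≤ n - 1 → f ≥ u i (d : ℝ)} (1 / (1 + (d : ℝ))) := by
  have hdpos : (0:ℝ) < (d:ℝ) + 1 := by positivity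
  have heq : u d (d : ℝ) = 1 / (1 + (d : ℝ)) := by
    rw [hu]
    have : (1:ℝ) + d = (d:ℝ) + 1 := by ring
    rw [this]
    field_simp
    ring
  have hle : ∀ i : ℕ, u i (d : ℝ) ≤ 1 / (1 + (d : ℝ)) := by
    intro i
    rw [hu]
    have h1 : (0:ℝ) < (i:ℝ) + 1 := by positivity
    have h2 : (0:ℝ) < (i:ℝ) + 2 := by positivity
    have h3 : (0:ℝ) < 1 + (d:ℝ) := by positivity
    have hk := key_prod i d
    rw [div_add_div _ _ (by positivity) (ne_of_gt h1), div_le_div_iff₀ (by positivity) h3]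
    ring_nf
    nlinarith [mul_pos h1 h2]
  refine ⟨heq, fun i _ => heq ▸ hle i, ⟨⟨d, hd, heq.symm⟩, ?_⟩, ⟨fun i _ => heq ▸ hle i, ?_⟩⟩
  · rintro r ⟨i, _, rfl⟩; exact hle i
  · intro f hf
    have := hf d hd
    rw [heq] at this
    exact this
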